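/- Let A : X → ℝ be θ-Hölder for some θ ∈ (0,1]. The relation on Ω(A) defined by x ∼ x̄ if and only if h_A(x, x̄) + h_A(x̄, x) = 0 is an equivalence relation: it is reflexive, symmetric, and transitive. -/

import Mathlib

open MeasureTheory Filter Topology

section GLT

variable {X : Type*} [MetricSpace X]

/-- A transitive expanding dynamical system: a continuous, surjective, open,
several-to-one map whose inverse branches are uniformly contracting, and which
is topologically transitive. -/
structure IsExpandingTransitive (T : X → X) : Prop where
  cont : Continuous T
  surj : Function.Surjective T
  isOpenMap : IsOpenMap T
  finite_preimages : ∀ x : X, {y : X | T y = x}.Finite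
  transitive : ∀ U V : Set X, IsOpen U → IsOpen V → U.Nonempty → V.Nonempty →
    ∃ n : ℕ, ((T^[n]) ⁻¹' U ∩ V).Nonempty
  contracting : ∃ lam : ℝ, 0 < lam ∧ lam < 1 ∧ ∃ δ : ℝ, 0 < δ ∧
    ∀ x y : X, dist x y ≤ δ → dist x y ≤ lam * dist (T x) (T y)

/-- `Abar` is the ergodic minimizing value of `A`: the minimum (attained) of
`∫ A dμ` over all `T`-invariant Borel probability measures `μ`. -/
def IsErgMinValue [MeasurableSpace X] (T : X → X) (A : X → ℝ) (Abar : ℝ) : Prop :=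
  (∃ μ : Measure X, IsProbabilityMeasure μ ∧ MeasurePreserving T μ μ ∧ (∫ x, A x ∂μ) = Abar) ∧
  ∀ μ : Measure X, IsProbabilityMeasure μ → MeasurePreserving T μ μ → Abar ≤ ∫ x, A x ∂μ

/-- `f` is θ-Hölder. -/
def IsThetaHolder (θ : ℝ) (f : X → ℝ) : Prop :=
  ∃ C : ℝ, 0 ≤ C ∧ ∀ x y : X, |f x - f y| ≤ C * dist x y ^ θ

/-- `u` is a (continuous) sub-action for `A` with ergodic minimizing value `Abar`. -/
def IsSubaction (T : X → X) (A : X → ℝ) (Abar : ℝ) (u : X → ℝ) : Prop :=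
  Continuous u ∧ ∀ x : X, u (T x) - u x + Abar ≤ A x

/-- The contact locus of a sub-action `u`. -/
def contactLocus (T : X → X) (A : X → ℝ) (Abar : ℝ) (u : X → ℝ) : Set X :=
  {x : X | A x = u (T x) - u x + Abar}

/-- The set `Ω(A)` of non-wandering points with respect to `A`. -/
def nonwanderingSet (T : X → X) (A : X → ℝ) (Abar : ℝ) : Set X :=
  {x : X | ∀ ε : ℝ, 0 < ε → ∃ k : ℕ, 1 ≤ k ∧ ∃ y : X,
    dist x y < ε ∧ dist x (T^[k] y) < ε ∧
    |∑ j ∈ Finset.range k, (A (T^[j] y) - Abar)| < ε}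

/-- `u` is a calibrated sub-action: `u x = min_{T y = x} [u y + A y - Abar]`,
the minimum being attained. -/
def IsCalibrated (T : X → X) (A : X → ℝ) (Abar : ℝ) (u : X → ℝ) : Prop :=
  Continuous u ∧ ∀ x : X,
    (∀ y : X, T y = x → u x ≤ u y + A y - Abar) ∧
    (∃ y : X, T y = x ∧ u x = u y + A y - Abar)

/-- `S_A^ε(x, x', k)`: infimum of Birkhoff sums of `A - Abar` over orbit segments of
length `k` starting within `ε` of `x` and ending within `ε` of `x'`
(`sInf ∅ = ⊤` in `EReal`). -/
noncomputable def birkhoffInf (T : X → X) (A : X → ℝ) (Abar : ℝ) (ε : ℝ) (x x' : X)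
    (k : ℕ) : EReal :=
  sInf {v : EReal | ∃ z : X, dist z x < ε ∧ dist (T^[k] z) x' < ε ∧
    v = ((∑ j ∈ Finset.range k, (A (T^[j] z) - Abar) : ℝ) : EReal)}

/-- The Mañé potential `φ_A(x, x') = lim_{ε→0} inf_{k ≥ 1} S_A^ε(x, x', k)`;
since the quantity is nonincreasing in `ε`, the limit as `ε → 0` is the
supremum over `ε > 0`. -/
noncomputable def manePotential (T : X → X) (A : X → ℝ) (Abar : ℝ) (x x' : X) : EReal :=
  ⨆ ε : {e : ℝ // 0 < e}, ⨅ k : {n : ℕ // 1 ≤ n}, birkhoffInf T A Abar ε.1 x x' k.1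

/-- The Peierls barrier `h_A(x, x') = lim_{ε→0} liminf_{k→∞} S_A^ε(x, x', k)`;
since the quantity is nonincreasing in `ε`, the limit as `ε → 0` is the
supremum over `ε > 0`. -/
noncomputable def peierlsBarrier (T : X → X) (A : X → ℝ) (Abar : ℝ) (x x' : X) : EReal :=
  ⨆ ε : {e : ℝ // 0 < e},
    Filter.liminf (fun k : ℕ => birkhoffInf T A Abar ε.1 x x' k) Filter.atTop

/-- `C` is an irreducible component of `Ω(A)`: an equivalence class of the
relation `x ∼ x' ↔ h_A(x, x') + h_A(x', x) = 0` on `Ω(A)`. -/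
def IsIrredComponent (T : X → X) (A : X → ℝ) (Abar : ℝ) (C : Set X) : Prop :=
  ∃ x ∈ nonwanderingSet T A Abar, C = {y ∈ nonwanderingSet T A Abar |
    peierlsBarrier T A Abar x y + peierlsBarrier T A Abar y x = 0}

/-- The θ-Hölder norm `‖f‖_θ = sup |f| + sup_{x ≠ y} |f x - f y| / d(x,y)^θ`. -/
noncomputable def holderNorm (θ : ℝ) (f : X → ℝ) : ℝ :=
  (⨆ x : X, |f x|) +
    ⨆ p : {p : X × X // p.1 ≠ p.2}, |f p.1.1 - f p.1.2| / dist p.1.1 p.1.2 ^ θ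

end GLT
set_option linter.unusedSectionVars false
set_option maxHeartbeats 1000000
open scoped ENNReal NNReal
open Filter MeasureTheory Topology

section Tool
variable {X : Type*} [MetricSpace X] [CompactSpace X] [Nonempty X]
variable (T : X → X) (A : X → ℝ) (Abar : ℝ)

noncomputable def PE.BSum (T : X → X) (A : X → ℝ) (Abar : ℝ) (k : ℕ) (z : X) : ℝ :=
  ∑ j ∈ Finset.range k, (A (T^[j] z) - Abar)

/-- liminf over k of the ε-constrained Birkhoff infimum. -/
noncomputable def PE.LF (ε : ℝ) (x y : X) : EReal :=
  Filter.liminf (fun k : ℕ => birkhoffInf T A Abar ε x y k) Filter.atTop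

lemma PE.peierls_eq (x y : X) :
    peierlsBarrier T A Abar x y = ⨆ ε : {e : ℝ // 0 < e}, PE.LF T A Abar ε.1 x y := rfl

lemma PE.birkhoffInf_le {ε : ℝ} {x y z : X} {k : ℕ}
    (h1 : dist z x < ε) (h2 : dist (T^[k] z) y < ε) :
    birkhoffInf T A Abar ε x y k ≤ ((PE.BSum T A Abar k z : ℝ) : EReal) :=
  sInf_le ⟨z, h1, h2, rfl⟩

lemma PE.liminf_le_of_freq {f : ℕ → EReal} {M : EReal} (h : ∀ N, ∃ k ≥ N, f k ≤ M) :
    Filter.liminf f Filter.atTop ≤ M := by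
  rw [Filter.liminf_eq]
  apply sSup_le
  intro a ha
  obtain ⟨N, hN⟩ := Filter.eventually_atTop.1 ha
  obtain ⟨k, hk, hfk⟩ := h N
  exact le_trans (hN k hk) hfk

lemma PE.le_liminf_of_ev {f : ℕ → EReal} {M : EReal} (N : ℕ) (h : ∀ k ≥ N, M ≤ f k) :
    M ≤ Filter.liminf f Filter.atTop := by
  rw [Filter.liminf_eq]
  exact le_sSup (Filter.eventually_atTop.2 ⟨N, h⟩)

lemma PE.extraction {ε M : ℝ} {x y : X} (hM : PE.LF T A Abar ε x y < (M : EReal)) :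
    ∀ N, ∃ k ≥ N, ∃ z, dist z x < ε ∧ dist (T^[k] z) y < ε ∧ PE.BSum T A Abar k z < M := by
  intro N
  by_contra h
  push_neg at h
  apply not_le.2 hM
  apply PE.le_liminf_of_ev N
  intro k hk
  apply le_sInf
  rintro v ⟨z, h1, h2, rfl⟩
  exact_mod_cast (h k hk z h1 h2)

lemma PE.birkhoffInf_anti {ε1 ε2 : ℝ} (h : ε1 ≤ ε2) (x y : X) (k : ℕ) :
    birkhoffInf T A Abar ε2 x y k ≤ birkhoffInf T A Abar ε1 x y k := by
  apply sInf_le_sInf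
  rintro v ⟨z, h1, h2, rfl⟩
  exact ⟨z, lt_of_lt_of_le h1 h, lt_of_lt_of_le h2 h, rfl⟩

lemma PE.LF_anti {ε1 ε2 : ℝ} (h : ε1 ≤ ε2) (x y : X) :
    PE.LF T A Abar ε2 x y ≤ PE.LF T A Abar ε1 x y :=
  Filter.liminf_le_liminf (Filter.Eventually.of_forall fun k => PE.birkhoffInf_anti T A Abar h x y k)

lemma PE.LF_le_peierls {ε : ℝ} (hε : 0 < ε) (x y : X) :
    PE.LF T A Abar ε x y ≤ peierlsBarrier T A Abar x y :=
  le_iSup (fun e : {e : ℝ // 0 < e} => PE.LF T A Abar e.1 x y) ⟨ε, hε⟩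

lemma PE.peierls_le {M : EReal} {x y : X} (h : ∀ ε : ℝ, 0 < ε → PE.LF T A Abar ε x y ≤ M) :
    peierlsBarrier T A Abar x y ≤ M :=
  iSup_le fun e => h e.1 e.2

lemma PE.ereal_le_of_forall_pos {a : EReal} {M : ℝ}
    (h : ∀ γ : ℝ, 0 < γ → a ≤ ((M + γ : ℝ) : EReal)) : a ≤ (M : EReal) := by
  by_contra hlt
  push_neg at hlt
  obtain ⟨b, hb1, hb2⟩ := EReal.exists_between_coe_real hlt
  have hMb : (M : ℝ) < b := by exact_mod_cast hb1
  have hγ : (0 : ℝ) < (b - M) / 2 := by linarith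
  have h1 := h _ hγ
  have h2 : ((M + (b - M) / 2 : ℝ) : EReal) < (b : EReal) := by
    exact_mod_cast (by linarith : M + (b - M) / 2 < b)
  exact absurd (lt_trans (lt_of_le_of_lt h1 h2) hb2) (lt_irrefl a)

lemma PE.ereal_add_eq_zero {a b : EReal} (h : a + b = 0) :
    ∃ a' b' : ℝ, a = (a' : EReal) ∧ b = (b' : EReal) ∧ a' + b' = 0 := by
  induction a with
  | bot => simp at h
  | coe a' =>
    induction b with
    | bot => simp at h
    | coe b' =>
      refine ⟨a', b', rfl, rfl, ?_⟩
      exact_mod_cast h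
    | top =>
      rw [EReal.coe_add_top] at h
      exact absurd h (by simp)
  | top =>
    induction b with
    | bot => simp at h
    | coe b' =>
      rw [EReal.top_add_coe] at h
      exact absurd h (by simp)
    | top => simp at h


end Tool

section Geo
variable {X : Type*} [MetricSpace X] [CompactSpace X] [Nonempty X]
variable {T : X → X} {lam dl r : ℝ}

/-- Uniform openness of an open map on a compact space. -/
lemma PE.unifOpen (hop : IsOpenMap T) (hco : Continuous T) (hdl : 0 < dl) :
    ∃ r > 0, ∀ p : X, Metric.ball (T p) r ⊆ T '' Metric.ball p (dl / 2) := by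
  by_contra h
  push_neg at h
  have hch : ∀ n : ℕ, ∃ p q : X, dist q (T p) < 1 / (n + 1) ∧ q ∉ T '' Metric.ball p (dl / 2) := by
    intro n
    obtain ⟨p, hp⟩ := h (1 / (n + 1)) (by positivity)
    rw [Set.not_subset] at hp
    obtain ⟨q, hq1, hq2⟩ := hp
    exact ⟨p, q, by simpa [Metric.mem_ball] using hq1, hq2⟩
  choose p q hq1 hq2 using hch
  obtain ⟨a, -, φ, hφ, hpa⟩ := IsCompact.tendsto_subseq (x := p) isCompact_univ (fun n => trivial)
  have hopen : IsOpen (T '' Metric.ball a (dl / 4)) := hop _ Metric.isOpen_ball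
  have hmem : T a ∈ T '' Metric.ball a (dl / 4) :=
    ⟨a, Metric.mem_ball_self (by positivity), rfl⟩
  obtain ⟨s, hs0, hs⟩ := Metric.isOpen_iff.1 hopen _ hmem
  have hTpa : Tendsto (fun n => T (p (φ n))) atTop (𝓝 (T a)) :=
    (hco.tendsto a).comp hpa
  have hq0 : Tendsto (fun n => dist (q (φ n)) (T (p (φ n)))) atTop (𝓝 0) := by
    apply squeeze_zero (fun n => dist_nonneg) (g := fun n : ℕ => 1 / (n + 1))
    · intro n
      calc dist (q (φ n)) (T (p (φ n))) ≤ 1 / (φ n + 1) := (hq1 (φ n)).le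
        _ ≤ 1 / (n + 1) := by
          apply one_div_le_one_div_of_le (by positivity)
          have h' : (n : ℝ) ≤ (φ n : ℝ) := Nat.cast_le.2 hφ.le_apply
          linarith
    · exact tendsto_one_div_add_atTop_nhds_zero_nat
  have hqa : Tendsto (fun n => q (φ n)) atTop (𝓝 (T a)) := by
    rw [Metric.tendsto_atTop] at hTpa ⊢
    rw [Metric.tendsto_atTop] at hq0
    intro ε hε
    obtain ⟨N1, h1⟩ := hTpa (ε / 2) (by positivity)
    obtain ⟨N2, h2⟩ := hq0 (ε / 2) (by positivity)
    refine ⟨max N1 N2, fun n hn => ?_⟩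
    have hd : dist (q (φ n)) (T (p (φ n))) < ε / 2 := by
      have := h2 n (le_of_max_le_right hn)
      rw [Real.dist_eq] at this
      have := abs_lt.1 this
      simpa using this.2
    calc dist (q (φ n)) (T a) ≤ dist (q (φ n)) (T (p (φ n))) + dist (T (p (φ n))) (T a) :=
          dist_triangle _ _ _
      _ < ε / 2 + ε / 2 := by
          have := h1 n (le_of_max_le_left hn)
          linarith
      _ = ε := by ring
  obtain ⟨N1, hN1⟩ := Metric.tendsto_atTop.1 hpa (dl / 4) (by positivity)
  obtain ⟨N2, hN2⟩ := Metric.tendsto_atTop.1 hqa s hs0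
  set n := max N1 N2 with hn
  have h1 : dist (p (φ n)) a < dl / 4 := hN1 n (le_max_left _ _)
  have h2 : q (φ n) ∈ Metric.ball (T a) s := hN2 n (le_max_right _ _)
  have h3 : q (φ n) ∈ T '' Metric.ball a (dl / 4) := hs h2
  apply hq2 (φ n)
  obtain ⟨u, hu, huq⟩ := h3
  refine ⟨u, ?_, huq⟩
  rw [Metric.mem_ball] at hu ⊢
  calc dist u (p (φ n)) ≤ dist u a + dist a (p (φ n)) := dist_triangle _ _ _
    _ < dl / 4 + dl / 4 := by rw [dist_comm a]; linarith
    _ ≤ dl / 2 := by linarith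

/-- Existence of contracting inverse branches with uniform radius. -/
lemma PE.branch (hop : IsOpenMap T) (hco : Continuous T) (hdl : 0 < dl)
    (hctr : ∀ x y : X, dist x y ≤ dl → dist x y ≤ lam * dist (T x) (T y)) :
    ∃ r > 0, ∀ p q : X, dist q (T p) ≤ r → ∃ p', T p' = q ∧ dist p' p ≤ lam * dist q (T p) := by
  obtain ⟨r0, hr0, hball⟩ := PE.unifOpen hop hco hdl
  refine ⟨r0 / 2, by positivity, fun p q hq => ?_⟩
  have hq' : q ∈ Metric.ball (T p) r0 := by
    rw [Metric.mem_ball]; linarith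
  obtain ⟨p', hp', hTp'⟩ := hball p hq'
  rw [Metric.mem_ball] at hp'
  have hd : dist p' p ≤ dl := by linarith
  refine ⟨p', hTp', ?_⟩
  have := hctr p' p hd
  rwa [hTp'] at this

/-- Pullback of a point along an orbit, with geometric control. -/
lemma PE.pullback (hl0 : 0 ≤ lam) (hl1 : lam ≤ 1) (hr : 0 < r)
    (hbr : ∀ p q : X, dist q (T p) ≤ r → ∃ p', T p' = q ∧ dist p' p ≤ lam * dist q (T p)) :
    ∀ (k : ℕ) (z q : X), dist q (T^[k] z) ≤ r →
      ∃ w, T^[k] w = q ∧ ∀ i ≤ k, dist (T^[i] w) (T^[i] z) ≤ lam ^ (k - i) * dist q (T^[k] z) := by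
  intro k
  induction k with
  | zero =>
    intro z q hq
    exact ⟨q, rfl, fun i hi => by simp_all⟩
  | succ k ih =>
    intro z q hq
    rw [Function.iterate_succ_apply] at hq
    obtain ⟨w', hw', hwd⟩ := ih (T z) q hq
    have hd0 : dist w' (T z) ≤ lam ^ k * dist q (T^[k] (T z)) := by
      simpa using hwd 0 (Nat.zero_le _)
    have hd0' : dist w' (T z) ≤ r := by
      calc dist w' (T z) ≤ lam ^ k * dist q (T^[k] (T z)) := hd0
        _ ≤ 1 * r := by
          apply mul_le_mul (pow_le_one₀ hl0 hl1) hq dist_nonneg zero_le_one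
        _ = r := one_mul r
    obtain ⟨w, hw, hwdist⟩ := hbr z w' hd0'
    refine ⟨w, ?_, ?_⟩
    · rw [Function.iterate_succ_apply, hw, hw']
    · intro i hi
      match i with
      | 0 =>
        simp only [Function.iterate_zero_apply]
        calc dist w z ≤ lam * dist w' (T z) := hwdist
          _ ≤ lam * (lam ^ k * dist q (T^[k] (T z))) := by
              apply mul_le_mul_of_nonneg_left hd0 hl0
          _ = lam ^ (k + 1 - 0) * dist q (T^[k + 1] z) := by
              rw [Function.iterate_succ_apply, Nat.sub_zero, pow_succ]; ring
      | (j + 1) =>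
        rw [Function.iterate_succ_apply, Function.iterate_succ_apply, hw]
        have hj : j ≤ k := Nat.succ_le_succ_iff.1 hi
        have := hwd j hj
        calc dist (T^[j] w') (T^[j] (T z)) ≤ lam ^ (k - j) * dist q (T^[k] (T z)) := this
          _ = lam ^ (k + 1 - (j + 1)) * dist q (T^[k + 1] z) := by
              rw [Function.iterate_succ_apply, Nat.succ_sub_succ]

/-- Backward expansivity along δ-close orbits. -/
lemma PE.expand (hl0 : 0 ≤ lam)
    (hctr : ∀ x y : X, dist x y ≤ dl → dist x y ≤ lam * dist (T x) (T y)) :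
    ∀ (k : ℕ) (a b : X), (∀ i < k, dist (T^[i] a) (T^[i] b) ≤ dl) →
      dist a b ≤ lam ^ k * dist (T^[k] a) (T^[k] b) := by
  intro k
  induction k with
  | zero => intro a b _; simp
  | succ k ih =>
    intro a b hd
    have h0 : dist a b ≤ lam * dist (T a) (T b) := hctr a b (by simpa using hd 0 (Nat.succ_pos k))
    have h1 : dist (T a) (T b) ≤ lam ^ k * dist (T^[k] (T a)) (T^[k] (T b)) := by
      apply ih
      intro i hi
      have := hd (i + 1) (Nat.succ_lt_succ hi)
      rwa [Function.iterate_succ_apply, Function.iterate_succ_apply] at this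
    calc dist a b ≤ lam * dist (T a) (T b) := h0
      _ ≤ lam * (lam ^ k * dist (T^[k] (T a)) (T^[k] (T b))) := mul_le_mul_of_nonneg_left h1 hl0
      _ = lam ^ (k + 1) * dist (T^[k + 1] a) (T^[k + 1] b) := by
          rw [Function.iterate_succ_apply, Function.iterate_succ_apply, pow_succ]; ring

/-- Anosov closing lemma for near-periodic orbits. -/
lemma PE.closing (hco : Continuous T) (hl0 : 0 < lam) (hl1 : lam < 1) (hdl : 0 < dl) (hr : 0 < r)
    (hctr : ∀ x y : X, dist x y ≤ dl → dist x y ≤ lam * dist (T x) (T y))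
    (hbr : ∀ p q : X, dist q (T p) ≤ r → ∃ p', T p' = q ∧ dist p' p ≤ lam * dist q (T p)) :
    ∀ ε : ℝ, 0 < ε → ε ≤ (1 - lam) * r → ε ≤ (1 - lam) * dl / 2 →
    ∀ (k : ℕ) (z : X), 1 ≤ k → dist (T^[k] z) z ≤ ε →
      ∃ p, T^[k] p = p ∧ ∀ i ≤ k, dist (T^[i] p) (T^[i] z) ≤ lam ^ (k - i) * (ε / (1 - lam)) := by
  intro ε hε hεr hεdl k z hk hloop
  have h1l : 0 < 1 - lam := by linarith
  have hεr' : ε / (1 - lam) ≤ r := by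
    rw [div_le_iff₀ h1l]; linarith [mul_comm r (1 - lam)]
  have hεdl' : 2 * (ε / (1 - lam)) ≤ dl := by
    have h2 : ε / (1 - lam) ≤ dl / 2 := by
      rw [div_le_div_iff₀ h1l two_pos]; nlinarith
    linarith
  -- the total pullback function
  have hstep : ∀ a : X, dist a (T^[k] z) ≤ r →
      ∃ b, T^[k] b = a ∧ ∀ i ≤ k, dist (T^[i] b) (T^[i] z) ≤ lam ^ (k - i) * dist a (T^[k] z) :=
    fun a ha => PE.pullback hl0.le hl1.le hr hbr k z a ha
  choose F hF1 hF2 using hstep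
  set G : X → X := fun a => if h : dist a (T^[k] z) ≤ r then F a h else z with hG
  set q : ℕ → X := fun m => G^[m] z with hq
  have hq0 : q 0 = z := rfl
  have hGq : ∀ m, q (m + 1) = G (q m) := fun m => Function.iterate_succ_apply' G m z
  have hGP : ∀ a : X, dist a (T^[k] z) ≤ r → T^[k] (G a) = a ∧
      ∀ i ≤ k, dist (T^[i] (G a)) (T^[i] z) ≤ lam ^ (k - i) * dist a (T^[k] z) := by
    intro a ha
    rw [hG]
    simp only [dif_pos ha]
    exact ⟨hF1 a ha, hF2 a ha⟩
  -- invariant: dist (q m) (T^[k] z) ≤ ε / (1 - lam)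
  have hlamk : lam ^ k ≤ lam := by
    calc lam ^ k ≤ lam ^ 1 := pow_le_pow_of_le_one hl0.le hl1.le hk
      _ = lam := pow_one lam
  have hinv : ∀ m, dist (q m) (T^[k] z) ≤ ε / (1 - lam) := by
    intro m
    induction m with
    | zero =>
      rw [hq0, dist_comm]
      calc dist (T^[k] z) z ≤ ε := hloop
        _ ≤ ε / (1 - lam) := by
          rw [le_div_iff₀ h1l]; nlinarith
    | succ m ih =>
      have hdom : dist (q m) (T^[k] z) ≤ r := le_trans ih hεr'
      have hb := (hGP (q m) hdom).2 0 (Nat.zero_le _)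
      simp only [Function.iterate_zero_apply] at hb
      rw [← hGq m] at hb
      calc dist (q (m + 1)) (T^[k] z) ≤ dist (q (m + 1)) z + dist z (T^[k] z) := dist_triangle _ _ _
        _ ≤ lam ^ (k - 0) * dist (q m) (T^[k] z) + ε := by
            rw [dist_comm z]
            exact add_le_add hb hloop
        _ ≤ lam * (ε / (1 - lam)) + ε := by
            rw [Nat.sub_zero]
            have : lam ^ k * dist (q m) (T^[k] z) ≤ lam * (ε / (1 - lam)) :=
              mul_le_mul hlamk ih dist_nonneg hl0.le
            linarith
        _ = ε / (1 - lam) := by field_simp; ring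
  -- key recursion facts
  have hdom : ∀ m, dist (q m) (T^[k] z) ≤ r := fun m => le_trans (hinv m) hεr'
  have hTq : ∀ m, T^[k] (q (m + 1)) = q m := fun m => by
    rw [hGq m]; exact (hGP (q m) (hdom m)).1
  have horb : ∀ m, ∀ i ≤ k, dist (T^[i] (q (m + 1))) (T^[i] z) ≤ lam ^ (k - i) * (ε / (1 - lam)) := by
    intro m i hi
    rw [hGq m]
    calc dist (T^[i] (G (q m))) (T^[i] z) ≤ lam ^ (k - i) * dist (q m) (T^[k] z) :=
          (hGP (q m) (hdom m)).2 i hi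
      _ ≤ lam ^ (k - i) * (ε / (1 - lam)) :=
          mul_le_mul_of_nonneg_left (hinv m) (pow_nonneg hl0.le _)
  -- contraction between consecutive iterates
  have hctr2 : ∀ m, dist (q (m + 2)) (q (m + 1)) ≤ lam * dist (q (m + 1)) (q m) := by
    intro m
    have hcl : ∀ i < k, dist (T^[i] (q (m + 2))) (T^[i] (q (m + 1))) ≤ dl := by
      intro i hi
      calc dist (T^[i] (q (m + 2))) (T^[i] (q (m + 1)))
          ≤ dist (T^[i] (q (m + 2))) (T^[i] z) + dist (T^[i] z) (T^[i] (q (m + 1))) :=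
            dist_triangle _ _ _
        _ ≤ lam ^ (k - i) * (ε / (1 - lam)) + lam ^ (k - i) * (ε / (1 - lam)) := by
            rw [dist_comm (T^[i] z)]
            exact add_le_add (horb (m + 1) i hi.le) (horb m i hi.le)
        _ ≤ ε / (1 - lam) + ε / (1 - lam) := by
            have h1 : lam ^ (k - i) ≤ 1 := pow_le_one₀ hl0.le hl1.le
            have h2 : 0 ≤ ε / (1 - lam) := by positivity
            nlinarith
        _ ≤ dl := by linarith
    calc dist (q (m + 2)) (q (m + 1)) ≤ lam ^ k * dist (T^[k] (q (m + 2))) (T^[k] (q (m + 1))) :=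
          PE.expand (dl := dl) hl0.le hctr k _ _ hcl
      _ = lam ^ k * dist (q (m + 1)) (q m) := by rw [hTq (m + 1), hTq m]
      _ ≤ lam * dist (q (m + 1)) (q m) := mul_le_mul_of_nonneg_right hlamk dist_nonneg
  -- geometric bound
  have hgeo : ∀ m, dist (q m) (q (m + 1)) ≤ (dist (q 0) (q 1)) * lam ^ m := by
    intro m
    induction m with
    | zero => simp
    | succ m ih =>
      rw [dist_comm]
      calc dist (q (m + 2)) (q (m + 1)) ≤ lam * dist (q (m + 1)) (q m) := hctr2 m
        _ = lam * dist (q m) (q (m + 1)) := by rw [dist_comm]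
        _ ≤ lam * (dist (q 0) (q 1) * lam ^ m) := mul_le_mul_of_nonneg_left ih hl0.le
        _ = dist (q 0) (q 1) * lam ^ (m + 1) := by ring
  have hcauchy : CauchySeq q :=
    cauchySeq_of_le_geometric lam (dist (q 0) (q 1)) hl1 hgeo
  obtain ⟨p, hp⟩ := cauchySeq_tendsto_of_complete hcauchy
  refine ⟨p, ?_, ?_⟩
  · -- T^[k] p = p
    have h1 : Tendsto (fun m => T^[k] (q (m + 1))) atTop (𝓝 (T^[k] p)) :=
      ((hco.iterate k).tendsto p).comp (hp.comp (tendsto_add_atTop_nat 1))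
    have h2 : Tendsto (fun m => T^[k] (q (m + 1))) atTop (𝓝 p) := by
      simp only [hTq]; exact hp
    exact tendsto_nhds_unique h1 h2
  · intro i hi
    have h1 : Tendsto (fun m => dist (T^[i] (q (m + 1))) (T^[i] z)) atTop
        (𝓝 (dist (T^[i] p) (T^[i] z))) := by
      apply Tendsto.dist _ tendsto_const_nhds
      exact ((hco.iterate i).tendsto p).comp (hp.comp (tendsto_add_atTop_nat 1))
    exact le_of_tendsto h1 (Eventually.of_forall fun m => horb m i hi)

lemma PE.geom_bound {s : ℝ} (hs0 : 0 ≤ s) (hs1 : s < 1) (k : ℕ) :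
    ∑ j ∈ Finset.range k, s ^ j ≤ 1 / (1 - s) := by
  induction k with
  | zero =>
    simp only [Finset.range_zero, Finset.sum_empty]
    have : 0 < 1 - s := by linarith
    positivity
  | succ k ih =>
    rw [Finset.sum_range_succ']
    have h1 : ∑ j ∈ Finset.range k, s ^ (j + 1) = s * ∑ j ∈ Finset.range k, s ^ j := by
      rw [Finset.mul_sum]
      exact Finset.sum_congr rfl fun j _ => by ring
    rw [h1]
    have h2 : s * ∑ j ∈ Finset.range k, s ^ j ≤ s * (1 / (1 - s)) := by
      apply mul_le_mul_of_nonneg_left ih hs0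
    have h3 : s * (1 / (1 - s)) + 1 = 1 / (1 - s) := by
      have : 1 - s ≠ 0 := by linarith
      field_simp
      ring
    simp only [pow_zero]
    linarith

lemma PE.pow_rpow {θ : ℝ} (hl0 : 0 ≤ lam) (n : ℕ) : (lam ^ n) ^ θ = (lam ^ θ) ^ n := by
  rw [← Real.rpow_natCast lam n, ← Real.rpow_natCast (lam ^ θ) n,
    ← Real.rpow_mul hl0, ← Real.rpow_mul hl0, mul_comm]

/-- Hölder comparison of Birkhoff sums along exponentially close orbits. -/
lemma PE.sum_compare {A : X → ℝ} {Abar C θ g : ℝ} (hC : 0 ≤ C)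
    (hA : ∀ x y : X, |A x - A y| ≤ C * dist x y ^ θ) (hθ0 : 0 < θ)
    (hl0 : 0 ≤ lam) (hl1 : lam < 1) (hg : 0 ≤ g)
    (k : ℕ) (w z : X) (hd : ∀ i < k, dist (T^[i] w) (T^[i] z) ≤ lam ^ (k - i) * g) :
    |PE.BSum T A Abar k w - PE.BSum T A Abar k z| ≤ C * g ^ θ / (1 - lam ^ θ) := by
  have hlθ : lam ^ θ < 1 := by
    rcases eq_or_lt_of_le hl0 with h | h
    · rw [← h]
      rw [Real.zero_rpow (ne_of_gt hθ0)]; norm_num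
    · exact Real.rpow_lt_one hl0 hl1 hθ0
  have hlθ0 : 0 ≤ lam ^ θ := Real.rpow_nonneg hl0 θ
  have h1lθ : 0 < 1 - lam ^ θ := by linarith
  have hsum : PE.BSum T A Abar k w - PE.BSum T A Abar k z
      = ∑ j ∈ Finset.range k, (A (T^[j] w) - A (T^[j] z)) := by
    rw [PE.BSum, PE.BSum, ← Finset.sum_sub_distrib]
    exact Finset.sum_congr rfl fun j _ => by ring
  rw [hsum]
  calc |∑ j ∈ Finset.range k, (A (T^[j] w) - A (T^[j] z))|
      ≤ ∑ j ∈ Finset.range k, |A (T^[j] w) - A (T^[j] z)| := Finset.abs_sum_le_sum_abs _ _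
    _ ≤ ∑ j ∈ Finset.range k, C * ((lam ^ θ) ^ (k - j) * g ^ θ) := by
        apply Finset.sum_le_sum
        intro j hj
        rw [Finset.mem_range] at hj
        calc |A (T^[j] w) - A (T^[j] z)| ≤ C * dist (T^[j] w) (T^[j] z) ^ θ := hA _ _
          _ ≤ C * ((lam ^ θ) ^ (k - j) * g ^ θ) := by
              apply mul_le_mul_of_nonneg_left _ hC
              calc dist (T^[j] w) (T^[j] z) ^ θ ≤ (lam ^ (k - j) * g) ^ θ :=
                    Real.rpow_le_rpow dist_nonneg (hd j hj) hθ0.le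
                _ = (lam ^ θ) ^ (k - j) * g ^ θ := by
                    rw [Real.mul_rpow (pow_nonneg hl0 _) hg, PE.pow_rpow hl0]
    _ = C * g ^ θ * ∑ j ∈ Finset.range k, (lam ^ θ) ^ (k - j) := by
        rw [Finset.mul_sum]
        exact Finset.sum_congr rfl fun j _ => by ring
    _ ≤ C * g ^ θ / (1 - lam ^ θ) := by
        have hrefl : ∑ j ∈ Finset.range k, (lam ^ θ) ^ (k - j)
            ≤ 1 / (1 - lam ^ θ) := by
          have : ∑ j ∈ Finset.range k, (lam ^ θ) ^ (k - j)
              = ∑ j ∈ Finset.range k, (lam ^ θ) ^ (j + 1) := by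
            rw [← Finset.sum_range_reflect]
            apply Finset.sum_congr rfl
            intro j hj
            rw [Finset.mem_range] at hj
            congr 1
            omega
          rw [this]
          calc ∑ j ∈ Finset.range k, (lam ^ θ) ^ (j + 1)
              ≤ ∑ j ∈ Finset.range k, (lam ^ θ) ^ j := by
                apply Finset.sum_le_sum
                intro j _
                exact pow_le_pow_of_le_one hlθ0 hlθ.le (Nat.le_succ j)
            _ ≤ 1 / (1 - lam ^ θ) := PE.geom_bound hlθ0 hlθ k
        have hCg : 0 ≤ C * g ^ θ := mul_nonneg hC (Real.rpow_nonneg hg θ)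
        calc C * g ^ θ * ∑ j ∈ Finset.range k, (lam ^ θ) ^ (k - j)
            ≤ C * g ^ θ * (1 / (1 - lam ^ θ)) := mul_le_mul_of_nonneg_left hrefl hCg
          _ = C * g ^ θ / (1 - lam ^ θ) := by ring

lemma PE.holder_continuous {A : X → ℝ} {C θ : ℝ} (hθ0 : 0 < θ)
    (hA : ∀ x y : X, |A x - A y| ≤ C * dist x y ^ θ) : Continuous A := by
  set C' : ℝ := max C 0 with hC'
  have hC0 : 0 ≤ C' := le_max_right _ _
  have hA' : ∀ x y : X, |A x - A y| ≤ C' * dist x y ^ θ := fun x y =>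
    le_trans (hA x y) (mul_le_mul_of_nonneg_right (le_max_left _ _) (Real.rpow_nonneg dist_nonneg θ))
  rw [Metric.continuous_iff]
  intro x ε hε
  refine ⟨(ε / (C' + 1)) ^ θ⁻¹, by positivity, fun y hy => ?_⟩
  have hδθ : ((ε / (C' + 1)) ^ θ⁻¹) ^ θ = ε / (C' + 1) :=
    Real.rpow_inv_rpow (by positivity) (ne_of_gt hθ0)
  have h1 : dist y x ^ θ < ε / (C' + 1) := by
    rw [← hδθ]
    exact Real.rpow_lt_rpow dist_nonneg hy hθ0
  have h2 : |A y - A x| ≤ C' * (dist y x ^ θ) := hA' y x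
  rw [Real.dist_eq]
  calc |A y - A x| ≤ C' * dist y x ^ θ := h2
    _ ≤ C' * (ε / (C' + 1)) := mul_le_mul_of_nonneg_left h1.le hC0
    _ < ε := by
      rw [mul_div_assoc']
      rw [div_lt_iff₀ (by positivity)]
      nlinarith

/-- A Birkhoff sum of `A - Abar` along a periodic orbit is nonnegative. -/
lemma PE.periodic_nonneg [MeasurableSpace X] [BorelSpace X]
    (hco : Continuous T) {A : X → ℝ} {Abar : ℝ} (hAc : Continuous A)
    (hAbar : IsErgMinValue T A Abar) {p : X} {n : ℕ} (hn : 1 ≤ n) (hp : T^[n] p = p) :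
    0 ≤ PE.BSum T A Abar n p := by
  classical
  set μ : Measure X := ((n : ℝ≥0∞)⁻¹) • ∑ i ∈ Finset.range n, Measure.dirac (T^[i] p) with hμ
  have hn0 : (n : ℝ≥0∞) ≠ 0 := by exact_mod_cast Nat.one_le_iff_ne_zero.1 hn
  have hnt : (n : ℝ≥0∞) ≠ ⊤ := ENNReal.natCast_ne_top n
  have hprob : IsProbabilityMeasure μ := by
    constructor
    rw [hμ, Measure.smul_apply, Measure.finset_sum_apply]
    simp only [Measure.dirac_apply' _ MeasurableSet.univ, Set.indicator_univ,
      Pi.one_apply, Finset.sum_const, Finset.card_range, nsmul_eq_mul, mul_one,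
      smul_eq_mul]
    exact ENNReal.inv_mul_cancel hn0 hnt
  have hmeas : Measurable T := hco.measurable
  have hpres : MeasurePreserving T μ μ := by
    refine ⟨hmeas, ?_⟩
    ext s hs
    rw [Measure.map_apply hmeas hs, hμ, Measure.smul_apply, Measure.smul_apply,
      Measure.finset_sum_apply, Measure.finset_sum_apply]
    congr 1
    have key : ∀ i : ℕ, Measure.dirac (T^[i] p) (T ⁻¹' s) = s.indicator 1 (T^[i + 1] p) := by
      intro i
      rw [Measure.dirac_apply' _ (hmeas hs)]
      simp only [Set.indicator_apply, Set.mem_preimage, Pi.one_apply,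
        ← Function.iterate_succ_apply' T i p, Nat.succ_eq_add_one]
    have key2 : ∀ i : ℕ, Measure.dirac (T^[i] p) s = s.indicator 1 (T^[i] p) := fun i =>
      Measure.dirac_apply' _ hs
    simp only [key, key2]
    -- cyclic shift of the sum
    set F : ℕ → ℝ≥0∞ := fun i => s.indicator 1 (T^[i] p) with hF
    have hFn : F n = F 0 := by simp [hF, hp]
    have h1 : ∑ i ∈ Finset.range (n + 1), F i = (∑ i ∈ Finset.range n, F (i + 1)) + F 0 :=
      Finset.sum_range_succ' F n
    have h2 : ∑ i ∈ Finset.range (n + 1), F i = (∑ i ∈ Finset.range n, F i) + F n :=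
      Finset.sum_range_succ F n
    have hfin : F 0 ≠ ⊤ := by
      simp only [hF, Set.indicator_apply]
      split <;> simp
    apply WithTop.add_right_cancel hfin
    rw [hFn] at h2; exact h1.symm.trans h2
  have hint : ∀ i ∈ Finset.range n, Integrable A (Measure.dirac (T^[i] p)) := by
    intro i _
    exact ⟨hAc.aestronglyMeasurable, by
      rw [hasFiniteIntegral_iff_norm]
      rw [lintegral_dirac' _ (by fun_prop)]
      exact ENNReal.ofReal_lt_top⟩
  have hini : ∫ x, A x ∂μ = (n : ℝ)⁻¹ * ∑ i ∈ Finset.range n, A (T^[i] p) := by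
    rw [hμ, integral_smul_measure, integral_finset_sum_measure hint]
    congr 1
    · rw [ENNReal.toReal_inv]; simp
    · exact Finset.sum_congr rfl fun i _ => integral_dirac A _
  have hge := hAbar.2 μ hprob hpres
  rw [hini] at hge
  have hnR : (0 : ℝ) < n := by exact_mod_cast hn
  rw [PE.BSum, Finset.sum_sub_distrib, Finset.sum_const, Finset.card_range]
  have : Abar * n ≤ ∑ i ∈ Finset.range n, A (T^[i] p) := by
    rw [inv_mul_eq_div, le_div_iff₀ hnR] at hge
    linarith
  simp only [nsmul_eq_mul]
  linarith


end Geo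

section Comp
variable {X : Type*} [MetricSpace X] [CompactSpace X] [Nonempty X]

/-- A context bundling the quantitative data of an expanding system and a
Hölder observable. -/
structure PE.Ctx (T : X → X) (A : X → ℝ) (Abar : ℝ) : Type _ where
  lam : ℝ
  dl : ℝ
  r : ℝ
  C : ℝ
  θ : ℝ
  bnd : ℝ
  hl0 : 0 < lam
  hl1 : lam < 1
  hdl : 0 < dl
  hr : 0 < r
  hC : 0 ≤ C
  hθ0 : 0 < θ
  hctr : ∀ x y : X, dist x y ≤ dl → dist x y ≤ lam * dist (T x) (T y)
  hbr : ∀ p q : X, dist q (T p) ≤ r → ∃ p', T p' = q ∧ dist p' p ≤ lam * dist q (T p)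
  hA : ∀ x y : X, |A x - A y| ≤ C * dist x y ^ θ
  hbnd : 0 ≤ bnd
  hAb : ∀ x : X, |A x - Abar| ≤ bnd

variable {T : X → X} {A : X → ℝ} {Abar : ℝ}

/-- The admissible closing scale. -/
noncomputable def PE.Ctx.ec (c : PE.Ctx T A Abar) : ℝ :=
  min ((1 - c.lam) * c.r) ((1 - c.lam) * c.dl / 2)

lemma PE.Ctx.ec_pos (c : PE.Ctx T A Abar) : 0 < c.ec := by
  have h := c.hl1
  have := c.hr
  have := c.hdl
  apply lt_min <;> nlinarith

/-- Closing error constant. -/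
noncomputable def PE.Ctx.Ka (c : PE.Ctx T A Abar) : ℝ :=
  c.C * ((1 - c.lam)⁻¹) ^ c.θ / (1 - c.lam ^ c.θ)

/-- Concatenation error constant. -/
noncomputable def PE.Ctx.Kb (c : PE.Ctx T A Abar) : ℝ :=
  c.C * (2 : ℝ) ^ c.θ / (1 - c.lam ^ c.θ)

lemma PE.Ctx.lamθ_lt_one (c : PE.Ctx T A Abar) : c.lam ^ c.θ < 1 :=
  Real.rpow_lt_one c.hl0.le c.hl1 c.hθ0

lemma PE.mkCtx (hT : IsExpandingTransitive T) {θ : ℝ} (hθ0 : 0 < θ)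
    (hA : IsThetaHolder θ A) : Nonempty (PE.Ctx T A Abar) := by
  obtain ⟨lam, hl0, hl1, dl, hdl, hctr⟩ := hT.contracting
  obtain ⟨C, hC, hAC⟩ := hA
  obtain ⟨r, hr, hbr⟩ := PE.branch hT.isOpenMap hT.cont hdl hctr
  obtain ⟨x0, -, hx0⟩ := isCompact_univ.exists_isMaxOn (Set.univ_nonempty (α := X))
    ((continuous_abs.comp ((PE.holder_continuous hθ0 hAC).sub continuous_const)).continuousOn)
  refine ⟨⟨lam, dl, r, C, θ, |A x0 - Abar|, hl0, hl1, hdl, hr, hC, hθ0, hctr, hbr, hAC,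
    abs_nonneg _, fun x => ?_⟩⟩
  exact hx0 (Set.mem_univ x)

lemma PE.BSum_add (T : X → X) (A : X → ℝ) (Abar : ℝ) (m n : ℕ) (z : X) :
    PE.BSum T A Abar (m + n) z = PE.BSum T A Abar m z + PE.BSum T A Abar n (T^[m] z) := by
  rw [PE.BSum, PE.BSum, PE.BSum, Finset.sum_range_add]
  congr 1
  apply Finset.sum_congr rfl
  intro j _
  rw [add_comm m j, Function.iterate_add_apply]

lemma PE.BSum_periodic (T : X → X) (A : X → ℝ) (Abar : ℝ) {n : ℕ} {p : X}
    (hp : T^[n] p = p) (m : ℕ) :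
    PE.BSum T A Abar (n * m) p = m * PE.BSum T A Abar n p := by
  induction m with
  | zero => simp [PE.BSum]
  | succ m ih =>
    have h1 : n * (m + 1) = n * m + n := by ring
    rw [h1, PE.BSum_add]
    have h2 : T^[n * m] p = p := by
      rw [Function.iterate_mul]
      exact Function.iterate_fixed hp m
    rw [h2, ih]
    push_cast
    ring

/-- Concatenation of two orbit segments via shadowing. -/
lemma PE.concat (c : PE.Ctx T A Abar) (z1 z2 : X) (k1 k2 : ℕ)
    (hg : dist z2 (T^[k1] z1) ≤ c.r) :
    ∃ w, T^[k1 + k2] w = T^[k2] z2 ∧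
      dist w z1 ≤ c.lam ^ k1 * dist z2 (T^[k1] z1) ∧
      PE.BSum T A Abar (k1 + k2) w ≤ PE.BSum T A Abar k1 z1 + PE.BSum T A Abar k2 z2 +
        c.C * (dist z2 (T^[k1] z1)) ^ c.θ / (1 - c.lam ^ c.θ) := by
  obtain ⟨w, hw1, hw2⟩ := PE.pullback c.hl0.le c.hl1.le c.hr c.hbr k1 z1 z2 hg
  refine ⟨w, ?_, by simpa using hw2 0 (Nat.zero_le _), ?_⟩
  · rw [add_comm k1 k2, Function.iterate_add_apply, hw1]
  · rw [PE.BSum_add, hw1]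
    have hcmp : |PE.BSum T A Abar k1 w - PE.BSum T A Abar k1 z1| ≤
        c.C * (dist z2 (T^[k1] z1)) ^ c.θ / (1 - c.lam ^ c.θ) := by
      apply PE.sum_compare c.hC c.hA c.hθ0 c.hl0.le c.hl1 dist_nonneg
      intro i hi
      exact hw2 i hi.le
    have := abs_le.1 hcmp
    linarith [this.2]

/-- Closing lemma with Birkhoff sum control. -/
lemma PE.closing_full (c : PE.Ctx T A Abar) (hco : Continuous T) {ε : ℝ}
    (hε : 0 < ε) (hεc : ε ≤ c.ec) {k : ℕ} {z : X} (hk : 1 ≤ k)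
    (hloop : dist (T^[k] z) z ≤ ε) :
    ∃ p, T^[k] p = p ∧ dist p z ≤ ε / (1 - c.lam) ∧
      |PE.BSum T A Abar k p - PE.BSum T A Abar k z| ≤ c.Ka * ε ^ c.θ := by
  have h1l : 0 < 1 - c.lam := by linarith [c.hl1]
  obtain ⟨p, hp, horb⟩ := PE.closing hco c.hl0 c.hl1 c.hdl c.hr c.hctr c.hbr ε hε
    (le_trans hεc (min_le_left _ _))
    (le_trans hεc (min_le_right _ _)) k z hk hloop
  refine ⟨p, hp, ?_, ?_⟩
  · have := horb 0 (Nat.zero_le _)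
    simp only [Function.iterate_zero_apply] at this
    calc dist p z ≤ c.lam ^ (k - 0) * (ε / (1 - c.lam)) := this
      _ ≤ 1 * (ε / (1 - c.lam)) := by
          apply mul_le_mul_of_nonneg_right (pow_le_one₀ c.hl0.le c.hl1.le) (by positivity)
      _ = ε / (1 - c.lam) := one_mul _
  · have hcmp := PE.sum_compare (Abar := Abar) c.hC c.hA c.hθ0 c.hl0.le c.hl1
      (g := ε / (1 - c.lam)) (by positivity) k p z (fun i hi => horb i hi.le)
    calc |PE.BSum T A Abar k p - PE.BSum T A Abar k z|
        ≤ c.C * (ε / (1 - c.lam)) ^ c.θ / (1 - c.lam ^ c.θ) := hcmp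
      _ = c.Ka * ε ^ c.θ := by
          rw [PE.Ctx.Ka, div_eq_mul_inv ε, Real.mul_rpow hε.le (by positivity)]
          ring

/-- Make `a * ε ^ θ` small. -/
lemma PE.rpow_small {θ : ℝ} (hθ0 : 0 < θ) (a η : ℝ) (hη : 0 < η) :
    ∃ ε0 > 0, ∀ ε : ℝ, 0 < ε → ε ≤ ε0 → a * ε ^ θ < η := by
  rcases le_or_gt a 0 with ha | ha
  · exact ⟨1, one_pos, fun ε hε _ =>
      lt_of_le_of_lt (mul_nonpos_of_nonpos_of_nonneg ha (Real.rpow_nonneg hε.le θ)) hη⟩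
  · refine ⟨(η / (2 * a)) ^ θ⁻¹, by positivity, fun ε hε hεle => ?_⟩
    have h1 : ε ^ θ ≤ η / (2 * a) := by
      calc ε ^ θ ≤ ((η / (2 * a)) ^ θ⁻¹) ^ θ := Real.rpow_le_rpow hε.le hεle hθ0.le
        _ = η / (2 * a) := Real.rpow_inv_rpow (by positivity) (ne_of_gt hθ0)
    calc a * ε ^ θ ≤ a * (η / (2 * a)) := mul_le_mul_of_nonneg_left h1 ha.le
      _ = η / 2 := by field_simp
      _ < η := by linarith

end Comp

section Main
variable {X : Type*} [MetricSpace X] [CompactSpace X] [Nonempty X]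
variable {T : X → X} {A : X → ℝ} {Abar : ℝ}

noncomputable def PE.Ctx.EK (c : PE.Ctx T A Abar) : ℝ := c.Kb + c.Ka * 4 ^ c.θ

lemma PE.Ctx.Ka_nonneg (c : PE.Ctx T A Abar) : 0 ≤ c.Ka := by
  have h1 : 0 < 1 - c.lam ^ c.θ := by linarith [c.lamθ_lt_one]
  have h2 : (0:ℝ) ≤ ((1 - c.lam)⁻¹) ^ c.θ := Real.rpow_nonneg (inv_nonneg.2 (by linarith [c.hl1])) _
  exact div_nonneg (mul_nonneg c.hC h2) h1.le

lemma PE.Ctx.Kb_nonneg (c : PE.Ctx T A Abar) : 0 ≤ c.Kb := by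
  have h1 : 0 < 1 - c.lam ^ c.θ := by linarith [c.lamθ_lt_one]
  have h2 : (0:ℝ) ≤ (2:ℝ) ^ c.θ := Real.rpow_nonneg (by norm_num) _
  exact div_nonneg (mul_nonneg c.hC h2) h1.le

lemma PE.Ctx.EK_nonneg (c : PE.Ctx T A Abar) : 0 ≤ c.EK :=
  add_nonneg c.Kb_nonneg (mul_nonneg c.Ka_nonneg (Real.rpow_nonneg (by norm_num) _))

lemma PE.BSum_bound (c : PE.Ctx T A Abar) (k : ℕ) (z : X) :
    |PE.BSum T A Abar k z| ≤ k * c.bnd := by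
  calc |PE.BSum T A Abar k z| ≤ ∑ j ∈ Finset.range k, |A (T^[j] z) - Abar| :=
        Finset.abs_sum_le_sum_abs _ _
    _ ≤ ∑ _j ∈ Finset.range k, c.bnd := Finset.sum_le_sum fun j _ => c.hAb _
    _ = k * c.bnd := by rw [Finset.sum_const, Finset.card_range, nsmul_eq_mul]

lemma PE.exists_return (hT : IsExpandingTransitive T) (x y : X) {ε : ℝ} (hε : 0 < ε) :
    ∃ (n : ℕ) (z : X), dist z y < ε ∧ dist (T^[n] z) x < ε := by
  obtain ⟨n, z, hz⟩ := hT.transitive (Metric.ball x ε) (Metric.ball y ε)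
    Metric.isOpen_ball Metric.isOpen_ball ⟨x, Metric.mem_ball_self hε⟩ ⟨y, Metric.mem_ball_self hε⟩
  exact ⟨n, z, by simpa [Metric.mem_ball] using hz.2, by
    have := hz.1; simpa [Metric.mem_ball] using this⟩

/-- Core contradiction: a two-leg loop with total Birkhoff sum below the error
threshold would produce a periodic orbit beating the minimizing value. -/
lemma PE.no_cheap_loop [MeasurableSpace X] [BorelSpace X] (c : PE.Ctx T A Abar)
    (hco : Continuous T) (hAbar : IsErgMinValue T A Abar)
    {ε : ℝ} (hε : 0 < ε) (hεr : 2 * ε ≤ c.r) (hεec : 4 * ε ≤ c.ec)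
    {x y : X} {k1 k2 : ℕ} {z1 z2 : X} (hk1 : 1 ≤ k1)
    (h1x : dist z1 x < ε) (h1y : dist (T^[k1] z1) y < ε)
    (h2y : dist z2 y < ε) (h2x : dist (T^[k2] z2) x < ε)
    (hsum : PE.BSum T A Abar k1 z1 + PE.BSum T A Abar k2 z2 + c.EK * ε ^ c.θ < 0) :
    False := by
  have h1lθ : 0 < 1 - c.lam ^ c.θ := by linarith [c.lamθ_lt_one]
  set g := dist z2 (T^[k1] z1) with hgdef
  have hg2 : g < 2 * ε := by
    calc g ≤ dist z2 y + dist y (T^[k1] z1) := dist_triangle _ _ _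
      _ < ε + ε := by rw [dist_comm y]; exact add_lt_add h2y h1y
      _ = 2 * ε := by ring
  have hgr : g ≤ c.r := le_trans hg2.le hεr
  obtain ⟨w, hw1, hwz1, hBw⟩ := PE.concat c z1 z2 k1 k2 hgr
  have hwz1' : dist w z1 < 2 * ε := by
    calc dist w z1 ≤ c.lam ^ k1 * g := hwz1
      _ ≤ 1 * g := mul_le_mul_of_nonneg_right (pow_le_one₀ c.hl0.le c.hl1.le) dist_nonneg
      _ = g := one_mul g
      _ < 2 * ε := hg2
  have hloop : dist (T^[k1 + k2] w) w ≤ 4 * ε := by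
    rw [hw1]
    calc dist (T^[k2] z2) w ≤ dist (T^[k2] z2) x + dist x w := dist_triangle _ _ _
      _ ≤ dist (T^[k2] z2) x + (dist x z1 + dist z1 w) := by
          linarith [dist_triangle x z1 w]
      _ ≤ ε + (ε + 2 * ε) := by
          rw [dist_comm x z1, dist_comm z1 w]
          exact add_le_add h2x.le (add_le_add h1x.le hwz1'.le)
      _ = 4 * ε := by ring
  have hconcat_err : c.C * g ^ c.θ / (1 - c.lam ^ c.θ) ≤ c.Kb * ε ^ c.θ := by
    have hgθ : g ^ c.θ ≤ (2 * ε) ^ c.θ := Real.rpow_le_rpow dist_nonneg hg2.le c.hθ0.le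
    have h2ε : ((2 : ℝ) * ε) ^ c.θ = 2 ^ c.θ * ε ^ c.θ := Real.mul_rpow (by norm_num) hε.le
    have hnum : c.C * g ^ c.θ ≤ c.C * 2 ^ c.θ * ε ^ c.θ := by
      calc c.C * g ^ c.θ ≤ c.C * (2 ^ c.θ * ε ^ c.θ) := by
            rw [← h2ε]; exact mul_le_mul_of_nonneg_left hgθ c.hC
        _ = c.C * 2 ^ c.θ * ε ^ c.θ := by ring
    calc c.C * g ^ c.θ / (1 - c.lam ^ c.θ)
        ≤ c.C * 2 ^ c.θ * ε ^ c.θ / (1 - c.lam ^ c.θ) := by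
          exact (div_le_div_iff_of_pos_right h1lθ).2 hnum
      _ = c.Kb * ε ^ c.θ := by rw [PE.Ctx.Kb]; ring
  obtain ⟨p, hp, hpz, hBp⟩ := PE.closing_full c hco (by positivity : (0:ℝ) < 4 * ε) hεec
    (le_trans hk1 (Nat.le_add_right k1 k2)) hloop
  have hclose_err : c.Ka * (4 * ε) ^ c.θ = c.Ka * 4 ^ c.θ * ε ^ c.θ := by
    rw [Real.mul_rpow (by norm_num) hε.le]; ring
  have hnn := PE.periodic_nonneg hco (PE.holder_continuous c.hθ0 c.hA) hAbar
    (le_trans hk1 (Nat.le_add_right k1 k2)) hp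
  have habs := abs_le.1 hBp
  rw [hclose_err] at habs
  have : PE.BSum T A Abar (k1 + k2) p ≤ PE.BSum T A Abar k1 z1 + PE.BSum T A Abar k2 z2 +
      c.EK * ε ^ c.θ := by
    rw [PE.Ctx.EK]
    have := habs.2
    nlinarith [hconcat_err, hBw]
  linarith

lemma PE.add_top_lt_zero {a : EReal} (h : a + ⊤ < 0) : a = ⊥ := by
  induction a with
  | bot => rfl
  | coe a' => rw [EReal.coe_add_top] at h; exact absurd h (by simp)
  | top => exact absurd h (by simp)

end Main

section Main2
variable {X : Type*} [MetricSpace X] [CompactSpace X] [Nonempty X]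
variable {T : X → X} {A : X → ℝ} {Abar : ℝ}

lemma PE.loop_from_bounds [MeasurableSpace X] [BorelSpace X] (c : PE.Ctx T A Abar)
    (hco : Continuous T) (hAbar : IsErgMinValue T A Abar) {x y : X}
    {ε : ℝ} (hε : 0 < ε) (hεr : 2 * ε ≤ c.r) (hεec : 4 * ε ≤ c.ec) {M1 M2 : ℝ}
    (hM1 : PE.LF T A Abar ε x y < (M1 : EReal))
    (h2seg : ∃ (k2 : ℕ) (z2 : X), dist z2 y < ε ∧ dist (T^[k2] z2) x < ε ∧
      PE.BSum T A Abar k2 z2 < M2)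
    (hMsum : M1 + M2 + c.EK * ε ^ c.θ ≤ 0) : False := by
  obtain ⟨k1, hk1, z1, h1x, h1y, hS1⟩ := PE.extraction T A Abar hM1 1
  obtain ⟨k2, z2, h2y, h2x, hS2⟩ := h2seg
  exact PE.no_cheap_loop c hco hAbar hε hεr hεec hk1 h1x h1y h2y h2x (by linarith)

lemma PE.ne_top_cases {a : EReal} (h : a ≠ ⊤) : a = ⊥ ∨ ∃ r : ℝ, a = (r : EReal) := by
  induction a with
  | bot => exact Or.inl rfl
  | coe r => exact Or.inr ⟨r, rfl⟩
  | top => exact absurd rfl h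

/-- Lower bound: the symmetrized Peierls barrier is nonnegative. -/
lemma PE.barrier_sum_nonneg [MeasurableSpace X] [BorelSpace X] (c : PE.Ctx T A Abar)
    (hT : IsExpandingTransitive T) (hAbar : IsErgMinValue T A Abar) (x y : X) :
    0 ≤ peierlsBarrier T A Abar x y + peierlsBarrier T A Abar y x := by
  by_contra hlt
  push_neg at hlt
  have hco := hT.cont
  set h1 := peierlsBarrier T A Abar x y with hh1
  set h2 := peierlsBarrier T A Abar y x with hh2
  have hbase : (0:ℝ) < min (c.r / 2) (c.ec / 4) :=
    lt_min (by linarith [c.hr]) (by linarith [c.ec_pos])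
  -- a convenient shortcut producing ε with the two scale constraints
  have hscales : ∀ ε : ℝ, 0 < ε → ε ≤ min (c.r / 2) (c.ec / 4) →
      2 * ε ≤ c.r ∧ 4 * ε ≤ c.ec := by
    intro ε hε hεle
    constructor
    · have := le_trans hεle (min_le_left _ _); linarith
    · have := le_trans hεle (min_le_right _ _); linarith
  by_cases htop2 : h2 = ⊤
  · -- h1 must be ⊥
    have hbot1 : h1 = ⊥ := PE.add_top_lt_zero (by rwa [htop2] at hlt)
    set ε := min (c.r / 2) (c.ec / 4) with hεdef
    obtain ⟨hεr, hεec⟩ := hscales ε hbase le_rfl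
    obtain ⟨n, z2, hz2y, hz2x⟩ := PE.exists_return hT x y hbase
    refine PE.loop_from_bounds c hco hAbar (x := x) (y := y) hbase hεr hεec
      (M1 := -(n * c.bnd + 1) - c.EK * ε ^ c.θ) (M2 := n * c.bnd + 1) ?_ ?_ (by linarith)
    · calc PE.LF T A Abar ε x y ≤ h1 := PE.LF_le_peierls T A Abar hbase x y
        _ = ⊥ := hbot1
        _ < _ := EReal.bot_lt_coe _
    · refine ⟨n, z2, hz2y, hz2x, ?_⟩
      have := abs_le.1 (PE.BSum_bound c n z2)
      linarith [this.2]
  · by_cases htop1 : h1 = ⊤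
    · -- h2 must be ⊥; symmetric loop based at y
      have hbot2 : h2 = ⊥ := PE.add_top_lt_zero (by rwa [htop1, add_comm] at hlt)
      set ε := min (c.r / 2) (c.ec / 4) with hεdef
      obtain ⟨hεr, hεec⟩ := hscales ε hbase le_rfl
      obtain ⟨n, z2, hz2x, hz2y⟩ := PE.exists_return hT y x hbase
      refine PE.loop_from_bounds c hco hAbar (x := y) (y := x) hbase hεr hεec
        (M1 := -(n * c.bnd + 1) - c.EK * ε ^ c.θ) (M2 := n * c.bnd + 1) ?_ ?_ (by linarith)
      · calc PE.LF T A Abar ε y x ≤ h2 := PE.LF_le_peierls T A Abar hbase y x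
          _ = ⊥ := hbot2
          _ < _ := EReal.bot_lt_coe _
      · refine ⟨n, z2, hz2x, hz2y, ?_⟩
        have := abs_le.1 (PE.BSum_bound c n z2)
        linarith [this.2]
    · -- both ≠ ⊤
      have hclaim : ∃ η : ℝ, 0 < η ∧ ∀ u : ℝ, 0 ≤ u → u ≤ η →
          ∃ M1 M2 : ℝ, h1 < (M1 : EReal) ∧ h2 < (M2 : EReal) ∧ M1 + M2 + u ≤ 0 := by
        rcases PE.ne_top_cases htop1 with hb1 | ⟨a1, ha1⟩
        · rcases PE.ne_top_cases htop2 with hb2 | ⟨a2, ha2⟩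
          · exact ⟨1, one_pos, fun u hu0 hu1 => ⟨-u, 0, by
              rw [hb1]; exact EReal.bot_lt_coe _, by
              rw [hb2]; exact EReal.bot_lt_coe _, by linarith⟩⟩
          · exact ⟨1, one_pos, fun u hu0 hu1 => ⟨-(a2 + 1) - u, a2 + 1, by
              rw [hb1]; exact EReal.bot_lt_coe _, by
              rw [ha2]; exact_mod_cast (by linarith : a2 < a2 + 1), by linarith⟩⟩
        · rcases PE.ne_top_cases htop2 with hb2 | ⟨a2, ha2⟩
          · exact ⟨1, one_pos, fun u hu0 hu1 => ⟨a1 + 1, -(a1 + 1) - u, by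
              rw [ha1]; exact_mod_cast (by linarith : a1 < a1 + 1), by
              rw [hb2]; exact EReal.bot_lt_coe _, by linarith⟩⟩
          · -- both real
            have ht : a1 + a2 < 0 := by
              rw [ha1, ha2] at hlt
              exact_mod_cast hlt
            set t := a1 + a2 with htdef
            refine ⟨-t / 2, by linarith, fun u hu0 hu1 => ?_⟩
            refine ⟨a1 - (t + u) / 4, a2 - (t + u) / 4, ?_, ?_, by linarith⟩
            · rw [ha1]; exact_mod_cast (by linarith : a1 < a1 - (t + u) / 4)
            · rw [ha2]; exact_mod_cast (by linarith : a2 < a2 - (t + u) / 4)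
      obtain ⟨η, hη, hcl⟩ := hclaim
      obtain ⟨ε1, hε1, hεsm⟩ := PE.rpow_small c.hθ0 c.EK η hη
      set ε := min ε1 (min (c.r / 2) (c.ec / 4)) with hεdef
      have hε : 0 < ε := lt_min hε1 hbase
      obtain ⟨hεr, hεec⟩ := hscales ε hε (min_le_right _ _)
      have hu0 : 0 ≤ c.EK * ε ^ c.θ :=
        mul_nonneg c.EK_nonneg (Real.rpow_nonneg hε.le _)
      have hu1 : c.EK * ε ^ c.θ ≤ η := (hεsm ε hε (min_le_left _ _)).le
      obtain ⟨M1, M2, hM1, hM2, hMsum⟩ := hcl _ hu0 hu1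
      refine PE.loop_from_bounds c hco hAbar (x := x) (y := y) hε hεr hεec (M1 := M1) (M2 := M2) ?_ ?_ hMsum
      · exact lt_of_le_of_lt (PE.LF_le_peierls T A Abar hε x y) hM1
      · have hex := PE.extraction T A Abar
          (lt_of_le_of_lt (PE.LF_le_peierls T A Abar hε y x) hM2) 0
        obtain ⟨k2, -, z2, hz2, hz2', hS2⟩ := hex
        exact ⟨k2, z2, hz2, hz2', hS2⟩

end Main2

section Main3
variable {X : Type*} [MetricSpace X] [CompactSpace X] [Nonempty X]
variable {T : X → X} {A : X → ℝ} {Abar : ℝ}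

lemma PE.concat_err (c : PE.Ctx T A Abar) {g ε : ℝ} (hg : 0 ≤ g) (h2 : g ≤ 2 * ε)
    (hε : 0 < ε) : c.C * g ^ c.θ / (1 - c.lam ^ c.θ) ≤ c.Kb * ε ^ c.θ := by
  have h1lθ : 0 < 1 - c.lam ^ c.θ := by linarith [c.lamθ_lt_one]
  have hgθ : g ^ c.θ ≤ (2 * ε) ^ c.θ := Real.rpow_le_rpow hg h2 c.hθ0.le
  have h2ε : ((2 : ℝ) * ε) ^ c.θ = 2 ^ c.θ * ε ^ c.θ := Real.mul_rpow (by norm_num) hε.le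
  have hnum : c.C * g ^ c.θ ≤ c.C * 2 ^ c.θ * ε ^ c.θ := by
    calc c.C * g ^ c.θ ≤ c.C * (2 ^ c.θ * ε ^ c.θ) := by
          rw [← h2ε]; exact mul_le_mul_of_nonneg_left hgθ c.hC
      _ = c.C * 2 ^ c.θ * ε ^ c.θ := by ring
  calc c.C * g ^ c.θ / (1 - c.lam ^ c.θ)
      ≤ c.C * 2 ^ c.θ * ε ^ c.θ / (1 - c.lam ^ c.θ) := (div_le_div_iff_of_pos_right h1lθ).2 hnum
    _ = c.Kb * ε ^ c.θ := by rw [PE.Ctx.Kb]; ring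

/-- Reflexivity (upper bound): at a non-wandering point the Peierls barrier
from `x` to itself is at most `0`. -/
lemma PE.refl_le [MeasurableSpace X] [BorelSpace X] (c : PE.Ctx T A Abar)
    (hco : Continuous T) (hAbar : IsErgMinValue T A Abar) {x : X}
    (hx : x ∈ nonwanderingSet T A Abar) :
    peierlsBarrier T A Abar x x ≤ 0 := by
  have h1l : 0 < 1 - c.lam := by linarith [c.hl1]
  set D : ℝ := 1 + 2 / (1 - c.lam) with hD
  have hD0 : 0 < D := by positivity
  apply PE.peierls_le
  intro ε0 hε0
  have : PE.LF T A Abar ε0 x x ≤ ((0 : ℝ) : EReal) := by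
    apply PE.ereal_le_of_forall_pos
    intro γ hγ
    rw [zero_add]
    apply PE.liminf_le_of_freq
    intro N
    set m : ℕ := N + 1 with hm
    have hm0 : (0 : ℝ) < m := by positivity
    obtain ⟨ε1, hε1, hεsm⟩ := PE.rpow_small c.hθ0 ((m : ℝ) * (c.Ka * 2 ^ c.θ)) (γ / 2)
      (by linarith)
    set ε := min ε1 (min (γ / (2 * (m + 1))) (min (c.ec / 2) (ε0 / (2 * D)))) with hεdef
    have hε : 0 < ε := by
      apply lt_min hε1
      apply lt_min (by positivity)
      exact lt_min (by linarith [c.ec_pos]) (by positivity)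
    -- nonwandering data at scale ε
    obtain ⟨k0, hk0, y, hxy, hxTy, hBy⟩ := hx ε hε
    have hgap : dist (T^[k0] y) y ≤ 2 * ε := by
      calc dist (T^[k0] y) y ≤ dist (T^[k0] y) x + dist x y := dist_triangle _ _ _
        _ ≤ ε + ε := by
            rw [dist_comm (T^[k0] y) x]
            exact add_le_add hxTy.le hxy.le
        _ = 2 * ε := by ring
    have h2εec : 2 * ε ≤ c.ec := by
      have h3 : ε ≤ c.ec / 2 := le_trans (min_le_right ε1 _)
        (le_trans (min_le_right _ _) (min_le_left _ _))
      linarith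
    obtain ⟨p, hp, hpy, hBp⟩ := PE.closing_full c hco (by positivity : (0:ℝ) < 2 * ε)
      h2εec hk0 hgap
    -- distance from p to x
    have hpx : dist p x < ε0 := by
      have hεD : ε ≤ ε0 / (2 * D) := le_trans (min_le_right ε1 _)
        (le_trans (min_le_right _ _) (min_le_right _ _))
      have h1 : dist p x ≤ dist p y + dist y x := dist_triangle _ _ _
      have h2 : dist y x < ε := by rwa [dist_comm]
      have h3 : dist p y ≤ 2 * ε / (1 - c.lam) := hpy
      have hDε : D * ε ≤ ε0 / 2 := by
        rw [hD]
        calc (1 + 2 / (1 - c.lam)) * ε ≤ (1 + 2 / (1 - c.lam)) * (ε0 / (2 * D)) :=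
              mul_le_mul_of_nonneg_left hεD (by positivity)
          _ = D * (ε0 / (2 * D)) := by rw [hD]
          _ = ε0 / 2 := by field_simp
      have : dist p x < ε + 2 * ε / (1 - c.lam) := by linarith
      have hcomb : ε + 2 * ε / (1 - c.lam) = D * ε := by rw [hD]; field_simp
      rw [hcomb] at this
      linarith
    -- Birkhoff sum bound over one period
    have hone : PE.BSum T A Abar k0 p ≤ ε + c.Ka * 2 ^ c.θ * ε ^ c.θ := by
      have h1 := (abs_le.1 hBp).2
      have h2 : |PE.BSum T A Abar k0 y| < ε := hBy
      have h3 : c.Ka * (2 * ε) ^ c.θ = c.Ka * 2 ^ c.θ * ε ^ c.θ := by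
        rw [Real.mul_rpow (by norm_num) hε.le]; ring
      rw [h3] at h1
      have := (abs_le.1 h2.le).2
      linarith
    -- the long period
    have hpm : T^[k0 * m] p = p := by
      rw [Function.iterate_mul]
      exact Function.iterate_fixed hp m
    have hkN : N ≤ k0 * m := by
      calc N ≤ m := by omega
        _ ≤ k0 * m := Nat.le_mul_of_pos_left m hk0
    refine ⟨k0 * m, hkN, ?_⟩
    have hwit := PE.birkhoffInf_le T A Abar (ε := ε0) (x := x) (y := x) (z := p)
      (k := k0 * m) hpx (by rwa [hpm])
    apply le_trans hwit
    apply EReal.coe_le_coe_iff.2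
    rw [PE.BSum_periodic T A Abar hp m]
    have hmε : (m : ℝ) * ε ≤ γ / 2 := by
      have hεm : ε ≤ γ / (2 * (m + 1)) := le_trans (min_le_right ε1 _) (min_le_left _ _)
      calc (m : ℝ) * ε ≤ (m : ℝ) * (γ / (2 * (m + 1))) :=
            mul_le_mul_of_nonneg_left hεm (by positivity)
        _ ≤ γ / 2 := by
            rw [mul_div_assoc', div_le_div_iff₀ (by positivity) (by norm_num : (0:ℝ) < 2)]
            nlinarith [hγ.le]
    have hmKa : (m : ℝ) * (c.Ka * 2 ^ c.θ * ε ^ c.θ) < γ / 2 := by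
      have := hεsm ε hε (min_le_left _ _)
      calc (m : ℝ) * (c.Ka * 2 ^ c.θ * ε ^ c.θ) = (m : ℝ) * (c.Ka * 2 ^ c.θ) * ε ^ c.θ := by
            ring
        _ < γ / 2 := this
    calc (m : ℝ) * PE.BSum T A Abar k0 p ≤ (m : ℝ) * (ε + c.Ka * 2 ^ c.θ * ε ^ c.θ) := by
          apply mul_le_mul_of_nonneg_left hone (by positivity)
      _ = (m : ℝ) * ε + (m : ℝ) * (c.Ka * 2 ^ c.θ * ε ^ c.θ) := by ring
      _ ≤ γ := by linarith
  simpa using this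

/-- Triangle-type upper bound for the Peierls barrier. -/
lemma PE.triangle_bound (c : PE.Ctx T A Abar) {x y z : X} {M1 M2 : ℝ}
    (hxy : peierlsBarrier T A Abar x y ≤ (M1 : EReal))
    (hyz : peierlsBarrier T A Abar y z ≤ (M2 : EReal)) :
    peierlsBarrier T A Abar x z ≤ ((M1 + M2 : ℝ) : EReal) := by
  apply PE.peierls_le
  intro ε0 hε0
  apply PE.ereal_le_of_forall_pos
  intro γ hγ
  apply PE.liminf_le_of_freq
  intro N
  obtain ⟨ε1, hε1, hεsm⟩ := PE.rpow_small c.hθ0 c.Kb (γ / 2) (by linarith)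
  set ε := min ε1 (min (ε0 / 3) (c.r / 2)) with hεdef
  have hε : 0 < ε := lt_min hε1 (lt_min (by positivity) (by linarith [c.hr]))
  have hεr : 2 * ε ≤ c.r := by
    have h := le_trans (min_le_right ε1 (min (ε0 / 3) (c.r / 2)))
      (min_le_right (ε0 / 3) (c.r / 2))
    linarith
  have hε3 : 3 * ε ≤ ε0 := by
    have h := le_trans (min_le_right ε1 (min (ε0 / 3) (c.r / 2)))
      (min_le_left (ε0 / 3) (c.r / 2))
    linarith
  have hLF1 : PE.LF T A Abar ε x y < ((M1 + γ / 4 : ℝ) : EReal) := by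
    apply lt_of_le_of_lt (le_trans (PE.LF_le_peierls T A Abar hε x y) hxy)
    exact_mod_cast (by linarith : M1 < M1 + γ / 4)
  have hLF2 : PE.LF T A Abar ε y z < ((M2 + γ / 4 : ℝ) : EReal) := by
    apply lt_of_le_of_lt (le_trans (PE.LF_le_peierls T A Abar hε y z) hyz)
    exact_mod_cast (by linarith : M2 < M2 + γ / 4)
  obtain ⟨k1, hk1, z1, h1x, h1y, hS1⟩ := PE.extraction T A Abar hLF1 N
  obtain ⟨k2, -, z2, h2y, h2z, hS2⟩ := PE.extraction T A Abar hLF2 0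
  -- concatenate
  have hg2 : dist z2 (T^[k1] z1) < 2 * ε := by
    calc dist z2 (T^[k1] z1) ≤ dist z2 y + dist y (T^[k1] z1) := dist_triangle _ _ _
      _ < ε + ε := by rw [dist_comm y]; exact add_lt_add h2y h1y
      _ = 2 * ε := by ring
  obtain ⟨w, hw1, hwz1, hBw⟩ := PE.concat c z1 z2 k1 k2 (le_trans hg2.le hεr)
  have hwx : dist w x < ε0 := by
    have h1 : dist w z1 ≤ dist z2 (T^[k1] z1) := by
      calc dist w z1 ≤ c.lam ^ k1 * dist z2 (T^[k1] z1) := hwz1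
        _ ≤ 1 * dist z2 (T^[k1] z1) :=
            mul_le_mul_of_nonneg_right (pow_le_one₀ c.hl0.le c.hl1.le) dist_nonneg
        _ = _ := one_mul _
    calc dist w x ≤ dist w z1 + dist z1 x := dist_triangle _ _ _
      _ < 2 * ε + ε := add_lt_add_of_le_of_lt (le_trans h1 hg2.le) h1x
      _ = 3 * ε := by ring
      _ ≤ ε0 := hε3
  have hwz : dist (T^[k1 + k2] w) z < ε0 := by
    rw [hw1]
    calc dist (T^[k2] z2) z < ε := h2z
      _ ≤ ε0 := by linarith
  refine ⟨k1 + k2, le_trans hk1 (Nat.le_add_right k1 k2), ?_⟩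
  apply le_trans (PE.birkhoffInf_le T A Abar hwx hwz)
  apply EReal.coe_le_coe_iff.2
  have herr : c.C * dist z2 (T^[k1] z1) ^ c.θ / (1 - c.lam ^ c.θ) ≤ c.Kb * ε ^ c.θ :=
    PE.concat_err c dist_nonneg hg2.le hε
  have hKb : c.Kb * ε ^ c.θ < γ / 2 := hεsm ε hε (min_le_left _ _)
  calc PE.BSum T A Abar (k1 + k2) w
      ≤ PE.BSum T A Abar k1 z1 + PE.BSum T A Abar k2 z2 +
        c.C * dist z2 (T^[k1] z1) ^ c.θ / (1 - c.lam ^ c.θ) := hBw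
    _ ≤ M1 + M2 + γ := by linarith

end Main3

lemma PE.ereal_self_zero {a : EReal} (h1 : a ≤ 0) (h2 : 0 ≤ a + a) : a + a = 0 := by
  induction a with
  | bot => simp at h2
  | coe r =>
    have hr : r ≤ 0 := by exact_mod_cast h1
    have h2' : (0 : ℝ) ≤ r + r := by exact_mod_cast h2
    have hr0 : r = 0 := by linarith
    rw [hr0]
    norm_num
  | top => exact absurd h1 (by simp)

/-- `x ∼ x' ↔ h_A(x, x') + h_A(x', x) = 0` is an equivalence
relation on `Ω(A)`. -/
theorem peierls_rel_equivalence {X : Type*} [MetricSpace X] [CompactSpace X] [Nonempty X]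
    [MeasurableSpace X] [BorelSpace X]
    (T : X → X) (hT : IsExpandingTransitive T)
    (θ : ℝ) (hθ0 : 0 < θ) (hθ1 : θ ≤ 1)
    (A : X → ℝ) (hA : IsThetaHolder θ A)
    (Abar : ℝ) (hAbar : IsErgMinValue T A Abar) :
    (∀ x ∈ nonwanderingSet T A Abar,
      peierlsBarrier T A Abar x x + peierlsBarrier T A Abar x x = 0) ∧
    (∀ x ∈ nonwanderingSet T A Abar, ∀ y ∈ nonwanderingSet T A Abar,
      peierlsBarrier T A Abar x y + peierlsBarrier T A Abar y x = 0 →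
      peierlsBarrier T A Abar y x + peierlsBarrier T A Abar x y = 0) ∧
    (∀ x ∈ nonwanderingSet T A Abar, ∀ y ∈ nonwanderingSet T A Abar,
      ∀ z ∈ nonwanderingSet T A Abar,
      peierlsBarrier T A Abar x y + peierlsBarrier T A Abar y x = 0 →
      peierlsBarrier T A Abar y z + peierlsBarrier T A Abar z y = 0 →
      peierlsBarrier T A Abar x z + peierlsBarrier T A Abar z x = 0) := by
  obtain ⟨c⟩ := PE.mkCtx (Abar := Abar) hT hθ0 hA
  have hco := hT.cont
  refine ⟨?_, ?_, ?_⟩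
  · intro x hx
    exact PE.ereal_self_zero (PE.refl_le c hco hAbar hx) (PE.barrier_sum_nonneg c hT hAbar x x)
  · intro x _ y _ h
    rwa [add_comm]
  · intro x hx y hy z hz h12 h23
    obtain ⟨a1, b1, ha1, hb1, hab1⟩ := PE.ereal_add_eq_zero h12
    obtain ⟨a2, b2, ha2, hb2, hab2⟩ := PE.ereal_add_eq_zero h23
    have hxz : peierlsBarrier T A Abar x z ≤ ((a1 + a2 : ℝ) : EReal) :=
      PE.triangle_bound c (le_of_eq ha1) (le_of_eq ha2)
    have hzx : peierlsBarrier T A Abar z x ≤ ((b2 + b1 : ℝ) : EReal) :=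
      PE.triangle_bound c (le_of_eq hb2) (le_of_eq hb1)
    have hupper : peierlsBarrier T A Abar x z + peierlsBarrier T A Abar z x ≤ 0 := by
      calc peierlsBarrier T A Abar x z + peierlsBarrier T A Abar z x
          ≤ ((a1 + a2 : ℝ) : EReal) + ((b2 + b1 : ℝ) : EReal) := add_le_add hxz hzx
        _ = (((a1 + a2) + (b2 + b1) : ℝ) : EReal) := by
            rw [← EReal.coe_add]
        _ = ((0 : ℝ) : EReal) := by
            congr 1
            linarith
        _ = 0 := by norm_num
    exact le_antisymm hupper (PE.barrier_sum_nonneg c hT hAbar x z)
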